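/- For any finite simple graph G, the minimum number τ(G) of edge-disjoint complete bipartite subgraphs needed to partition the edge set of G is at least max{n₊, n₋}, where n₊ and n₋ are the numbers of positive and negative eigenvalues of the adjacency matrix of G. -/

import Mathlib

open Finset

/-- `A i`, `B i` (for `i : Fin k`) form a bipartite decomposition of `G`:
each pair forms a complete bipartite subgraph of `G`, and every edge of `G`
lies in exactly one of these complete bipartite subgraphs. -/
def IsBipDecomp {V : Type*} [DecidableEq V] (G : SimpleGraph V)
    {k : ℕ} (A B : Fin k → Finset V) : Prop :=
  (∀ i, Disjoint (A i) (B i)) ∧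
  (∀ i, ∀ a ∈ A i, ∀ b ∈ B i, G.Adj a b) ∧
  ∀ e ∈ G.edgeSet, ∃! i : Fin k, e ∈ (A i ×ˢ B i).image fun p => s(p.1, p.2)

section Aux

open Matrix

variable {V : Type*} [Fintype V] [DecidableEq V]

private lemma dotProduct_sum' {ι : Type*} (s : Finset ι) (v : V → ℝ) (f : ι → V → ℝ) :
    v ⬝ᵥ (∑ j ∈ s, f j) = ∑ j ∈ s, v ⬝ᵥ f j := by
  simp only [dotProduct, Finset.sum_apply, Finset.mul_sum]
  exact Finset.sum_comm

private lemma sum_dotProduct' {ι : Type*} (s : Finset ι) (v : V → ℝ) (f : ι → V → ℝ) :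
    (∑ j ∈ s, f j) ⬝ᵥ v = ∑ j ∈ s, f j ⬝ᵥ v := by
  simp only [dotProduct, Finset.sum_apply, Finset.sum_mul]
  exact Finset.sum_comm

/-- The quadratic form of the adjacency matrix, expressed through a bipartite
decomposition. -/
private lemma quad_eq (G : SimpleGraph V) [DecidableRel G.Adj]
    {k : ℕ} (A B : Fin k → Finset V) (hdec : IsBipDecomp G A B) (x : V → ℝ) :
    x ⬝ᵥ (G.adjMatrix ℝ *ᵥ x) = ∑ i, 2 * ((∑ a ∈ A i, x a) * (∑ b ∈ B i, x b)) := by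
  classical
  obtain ⟨hdisj, hadj, huniq⟩ := hdec
  -- membership in one part of the decomposition implies being an edge image
  have himg : ∀ (i : Fin k) (p : V × V),
      p ∈ (A i ×ˢ B i) ∪ (B i ×ˢ A i) →
      s(p.1, p.2) ∈ (A i ×ˢ B i).image fun q => s(q.1, q.2) := by
    rintro i ⟨v, w⟩ hp
    rcases Finset.mem_union.1 hp with h | h
    · exact Finset.mem_image.2 ⟨(v, w), h, rfl⟩
    · rw [Finset.mem_product] at h
      exact Finset.mem_image.2 ⟨(w, v), Finset.mem_product.2 ⟨h.2, h.1⟩, Sym2.eq_swap⟩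
  have hadj' : ∀ (i : Fin k) (p : V × V),
      p ∈ (A i ×ˢ B i) ∪ (B i ×ˢ A i) → G.Adj p.1 p.2 := by
    rintro i ⟨v, w⟩ hp
    rcases Finset.mem_union.1 hp with h | h
    · rw [Finset.mem_product] at h
      exact hadj i v h.1 w h.2
    · rw [Finset.mem_product] at h
      exact (hadj i w h.2 v h.1).symm
  -- the set of ordered adjacent pairs decomposes
  have hset : (Finset.univ.filter fun p : V × V => G.Adj p.1 p.2) =
      Finset.univ.biUnion fun i : Fin k => (A i ×ˢ B i) ∪ (B i ×ˢ A i) := by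
    ext ⟨v, w⟩
    simp only [Finset.mem_filter, Finset.mem_univ, true_and, Finset.mem_biUnion]
    constructor
    · intro hvw
      obtain ⟨i, hi, -⟩ := huniq s(v, w) ((SimpleGraph.mem_edgeSet G).2 hvw)
      obtain ⟨⟨a, b⟩, hab, heq⟩ := Finset.mem_image.1 hi
      rw [Finset.mem_product] at hab
      rcases Sym2.eq_iff.1 heq with ⟨rfl, rfl⟩ | ⟨rfl, rfl⟩
      · exact ⟨i, Finset.mem_union_left _ (Finset.mem_product.2 ⟨hab.1, hab.2⟩)⟩
      · exact ⟨i, Finset.mem_union_right _ (Finset.mem_product.2 ⟨hab.2, hab.1⟩)⟩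
    · rintro ⟨i, hi⟩
      exact hadj' i (v, w) hi
  -- the pieces are pairwise disjoint
  have hpd : ((Finset.univ : Finset (Fin k)) : Set (Fin k)).PairwiseDisjoint
      fun i : Fin k => (A i ×ˢ B i) ∪ (B i ×ˢ A i) := by
    intro i _ j _ hij
    simp only [Function.onFun]
    rw [Finset.disjoint_left]
    rintro ⟨v, w⟩ hpi hpj
    have hvw : G.Adj v w := hadj' i (v, w) hpi
    obtain ⟨i', -, hu⟩ := huniq s(v, w) ((SimpleGraph.mem_edgeSet G).2 hvw)
    exact hij ((hu i (himg i (v, w) hpi)).trans (hu j (himg j (v, w) hpj)).symm)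
  -- compute the quadratic form as a sum over ordered adjacent pairs
  have hLHS : x ⬝ᵥ (G.adjMatrix ℝ *ᵥ x) =
      ∑ p ∈ Finset.univ.filter fun p : V × V => G.Adj p.1 p.2, x p.1 * x p.2 := by
    rw [Finset.sum_filter, Fintype.sum_prod_type]
    simp only [dotProduct, SimpleGraph.adjMatrix_mulVec_apply,
      SimpleGraph.neighborFinset_eq_filter, Finset.sum_filter, Finset.mul_sum]
    refine Finset.sum_congr rfl fun a _ => Finset.sum_congr rfl fun b _ => ?_
    by_cases h : G.Adj a b <;> simp [h]
  rw [hLHS, hset, Finset.sum_biUnion hpd]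
  refine Finset.sum_congr rfl fun i _ => ?_
  have hABd : Disjoint (A i ×ˢ B i) (B i ×ˢ A i) := by
    rw [Finset.disjoint_left]
    rintro ⟨v, w⟩ h1 h2
    rw [Finset.mem_product] at h1 h2
    exact Finset.disjoint_left.1 (hdisj i) h1.1 h2.1
  rw [Finset.sum_union hABd, Finset.sum_product, Finset.sum_product]
  rw [← Finset.sum_mul_sum (A i) (B i) x x]
  have : ∑ b ∈ B i, ∑ a ∈ A i, x b * x a = (∑ a ∈ A i, x a) * (∑ b ∈ B i, x b) := by
    rw [← Finset.sum_mul_sum (B i) (A i) x x, mul_comm]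
  rw [this]; ring

/-- The key counting lemma: if all eigenvalues indexed by `S` have a fixed
strict sign (`0 < ε * eigenvalue`), then `S.card ≤ k`. -/
private lemma key (G : SimpleGraph V) [DecidableRel G.Adj]
    (hH : (G.adjMatrix ℝ).IsHermitian) {k : ℕ} (A B : Fin k → Finset V)
    (hdec : IsBipDecomp G A B) (S : Finset V) (ε : ℝ)
    (hS : ∀ j ∈ S, 0 < ε * hH.eigenvalues j) : S.card ≤ k := by
  classical
  by_contra hk
  push_neg at hk
  set w : V → V → ℝ := fun j => ⇑(hH.eigenvectorBasis j) with hw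
  -- the linear map sending coefficients to the part-sums of the combination
  let φ : (↥S → ℝ) →ₗ[ℝ] (Fin k → ℝ) :=
    { toFun := fun c i => ∑ a ∈ A i, ∑ j : ↥S, c j * w j a
      map_add' := by
        intro c d; funext i
        simp [add_mul, Finset.sum_add_distrib]
      map_smul' := by
        intro r c; funext i
        simp [Finset.mul_sum, mul_assoc] }
  have hninj : ¬ Function.Injective φ := by
    intro h
    have h1 := LinearMap.finrank_le_finrank_of_injective h
    rw [Module.finrank_pi, Module.finrank_pi] at h1
    simp only [Fintype.card_coe, Fintype.card_fin] at h1
    omega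
  have hker : LinearMap.ker φ ≠ ⊥ := fun h => hninj (LinearMap.ker_eq_bot.1 h)
  obtain ⟨c, hcmem, hc0⟩ := Submodule.exists_mem_ne_zero_of_ne_bot hker
  set x : V → ℝ := fun a => ∑ j : ↥S, c j * w j a with hx
  have hxA : ∀ i, ∑ a ∈ A i, x a = 0 := by
    intro i
    have := congrFun (LinearMap.mem_ker.1 hcmem) i
    simpa [φ, hx] using this
  have hq0 : x ⬝ᵥ (G.adjMatrix ℝ *ᵥ x) = 0 := by
    rw [quad_eq G A B hdec x]
    simp [hxA]
  -- orthonormality of the eigenvectors as dot products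
  have hortho : ∀ j j' : ↥S, w j ⬝ᵥ w j' = if j = j' then 1 else 0 := by
    intro j j'
    have horth := hH.eigenvectorBasis.orthonormal
    rw [orthonormal_iff_ite] at horth
    have h1 := horth (j : V) (j' : V)
    have h2 : (inner ℝ (hH.eigenvectorBasis (j : V)) (hH.eigenvectorBasis (j' : V)) : ℝ)
        = w j ⬝ᵥ w j' := by
      simp [PiLp.inner_apply, dotProduct, RCLike.inner_apply, hw, mul_comm]
    rw [h2] at h1
    rw [h1]
    exact if_congr Subtype.ext_iff.symm rfl rfl
  -- express x as a sum of scaled eigenvectors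
  have hx_sum : x = ∑ j : ↥S, c j • w j := by
    funext a
    simp [hx, Finset.sum_apply]
  have hmv : ∀ j : ↥S, G.adjMatrix ℝ *ᵥ w j = hH.eigenvalues (j : V) • w j :=
    fun j => hH.mulVec_eigenvectorBasis (j : V)
  -- spectral computation of the quadratic form
  have hdot : x ⬝ᵥ (G.adjMatrix ℝ *ᵥ x) =
      ∑ j : ↥S, c j * c j * hH.eigenvalues (j : V) := by
    have hmvx : G.adjMatrix ℝ *ᵥ x =
        ∑ j : ↥S, (c j * hH.eigenvalues (j : V)) • w j := by
      rw [hx_sum]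
      rw [show (G.adjMatrix ℝ) *ᵥ (∑ j : ↥S, c j • w j)
          = (G.adjMatrix ℝ).mulVecLin (∑ j : ↥S, c j • w j) from rfl]
      rw [map_sum]
      refine Finset.sum_congr rfl fun j _ => ?_
      rw [(G.adjMatrix ℝ).mulVecLin.map_smul, Matrix.mulVecLin_apply, hmv j, smul_smul]
    rw [hmvx, hx_sum, sum_dotProduct']
    refine Finset.sum_congr rfl fun j _ => ?_
    rw [dotProduct_sum']
    have hterm : ∀ j' : ↥S, (c j • w j) ⬝ᵥ ((c j' * hH.eigenvalues (j' : V)) • w j')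
        = (c j * (c j' * hH.eigenvalues (j' : V))) * (w j ⬝ᵥ w j') := by
      intro j'
      rw [smul_dotProduct, dotProduct_smul]
      simp [mul_assoc]
    rw [Finset.sum_congr rfl fun j' _ => hterm j']
    simp only [hortho, mul_ite, mul_one, mul_zero]
    rw [Finset.sum_ite_eq]
    simp only [Finset.mem_univ, if_true]
    ring
  -- strict positivity contradicts the vanishing of the quadratic form
  obtain ⟨j0, hj0⟩ := Function.ne_iff.1 hc0
  have hpos : 0 < ∑ j : ↥S, (c j * c j) * (ε * hH.eigenvalues (j : V)) := by
    refine Finset.sum_pos' (fun j _ => ?_) ⟨j0, Finset.mem_univ j0, ?_⟩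
    · exact mul_nonneg (mul_self_nonneg _) (le_of_lt (hS (j : V) j.2))
    · exact mul_pos (mul_self_pos.2 (by simpa using hj0)) (hS (j0 : V) j0.2)
  have heq : ∑ j : ↥S, (c j * c j) * (ε * hH.eigenvalues (j : V))
      = ε * (x ⬝ᵥ (G.adjMatrix ℝ *ᵥ x)) := by
    rw [hdot, Finset.mul_sum]
    exact Finset.sum_congr rfl fun j _ => by ring
  rw [heq, hq0, mul_zero] at hpos
  exact lt_irrefl 0 hpos

end Aux

/-- Graham–Pollak lower bound: any partition of the edge set of `G` into `k`
edge-disjoint complete bipartite subgraphs satisfies `k ≥ max{n₊, n₋}`, where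
`n₊` (resp. `n₋`) is the number of positive (resp. negative) eigenvalues of the
adjacency matrix of `G`, counted with multiplicity. -/
theorem stmt0 {V : Type*} [Fintype V] [DecidableEq V] (G : SimpleGraph V) [DecidableRel G.Adj]
    (hH : (G.adjMatrix ℝ).IsHermitian)
    (k : ℕ) (A B : Fin k → Finset V) (hdec : IsBipDecomp G A B) :
    (Finset.univ.filter fun i => 0 < hH.eigenvalues i).card ≤ k ∧
    (Finset.univ.filter fun i => hH.eigenvalues i < 0).card ≤ k := by
  constructor
  · refine key G hH A B hdec _ 1 fun j hj => ?_
    rw [one_mul]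
    exact (Finset.mem_filter.1 hj).2
  · refine key G hH A B hdec _ (-1) fun j hj => ?_
    have := (Finset.mem_filter.1 hj).2
    nlinarith
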